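/- Let S and P be unital complex *-algebras, let ω be a state on S and σ a state on P, and let Θ be a unital algebra automorphism of S⊗P that preserves the star operation (with (a⊗b)* = a*⊗b*). Let E ∈ P be positive, i.e., E = Σ_i λ_i b_i* b_i for finitely many b_i ∈ P and nonnegative reals λ_i. Then p := (ω⊗σ)(Θ(1⊗E)) is a nonnegative real number, and if p ≠ 0 the functional C ↦ p⁻¹ · (ω⊗σ)(Θ(C⊗E)) is a state on S. -/

import Mathlib

open scoped ComplexOrder TensorProduct

/-- The tensor product `ω ⊗ σ` of two linear functionals, determined by
`(ω ⊗ σ)(a ⊗ b) = ω a * σ b`. -/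
noncomputable def tensorFunctional {A B : Type*} [Ring A] [Algebra ℂ A]
    [Ring B] [Algebra ℂ B] (ω : A →ₗ[ℂ] ℂ) (σ : B →ₗ[ℂ] ℂ) :
    A ⊗[ℂ] B →ₗ[ℂ] ℂ :=
  (TensorProduct.lid ℂ ℂ).toLinearMap.comp (TensorProduct.map ω σ)

/-- The (unnormalised) selective update functional `C ↦ (ω ⊗ σ)(Θ (C ⊗ E))`. -/
noncomputable def selectiveUpdateAux {S P : Type*} [Ring S] [Algebra ℂ S]
    [Ring P] [Algebra ℂ P] (ω : S →ₗ[ℂ] ℂ) (σ : P →ₗ[ℂ] ℂ)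
    (Θ : (S ⊗[ℂ] P) ≃ₐ[ℂ] (S ⊗[ℂ] P)) (E : P) : S →ₗ[ℂ] ℂ :=
  (tensorFunctional ω σ).comp
    (Θ.toLinearMap.comp ((TensorProduct.mk ℂ S P).flip E))

/-- Hermiticity of a positive linear functional on a complex `*`-algebra:
`σ (b* a) = conj (σ (a* b))`, obtained by polarisation. -/
lemma pos_herm {A : Type*} [Ring A] [Algebra ℂ A] [StarRing A] [StarModule ℂ A]
    (σ : A →ₗ[ℂ] ℂ) (hσpos : ∀ b : A, 0 ≤ σ (star b * b)) (a b : A) :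
    σ (star b * a) = starRingEnd ℂ (σ (star a * b)) := by
  have him : ∀ c : A, (σ (star c * c)).im = 0 := fun c =>
    ((Complex.nonneg_iff.mp (hσpos c)).2).symm
  have e1 : star (a + b) * (a + b)
      = star a * a + (star a * b + star b * a) + star b * b := by
    rw [star_add]; noncomm_ring
  have e2 : star (a + Complex.I • b) * (a + Complex.I • b)
      = star a * a + (Complex.I • (star a * b) - Complex.I • (star b * a)) + star b * b := by
    rw [star_add, star_smul, Complex.star_def, Complex.conj_I]
    simp only [add_mul, mul_add, smul_mul_assoc, Algebra.mul_smul_comm, smul_add,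
      smul_smul, neg_smul, neg_mul, neg_neg, Complex.I_mul_I, one_smul]
    match_scalars <;> ring_nf <;> simp [Complex.I_sq]
  have h1 := him (a + b); rw [e1] at h1
  have h2 := him (a + Complex.I • b); rw [e2] at h2
  simp only [map_add, map_sub, map_smul, Complex.add_im, Complex.sub_im,
    smul_eq_mul, Complex.mul_im, Complex.I_re, Complex.I_im, him a, him b] at h1 h2
  apply Complex.ext <;>
    simp only [Complex.conj_re, Complex.conj_im] <;> linarith

/-- Expansion of the quadratic form of a linear functional. -/
lemma expand_quad {A : Type*} [Ring A] [Algebra ℂ A] [StarRing A] [StarModule ℂ A]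
    {ι : Type*} [Fintype ι] (σ : A →ₗ[ℂ] ℂ) (c : ι → ℂ) (b : ι → A) :
    σ (star (∑ i, c i • b i) * ∑ j, c j • b j)
      = ∑ i, ∑ j, starRingEnd ℂ (c i) * c j * σ (star (b i) * b j) := by
  rw [star_sum, Finset.sum_mul_sum]
  simp only [star_smul, Complex.star_def, smul_mul_smul_comm, map_sum, map_smul, smul_eq_mul]

/-- Schur-type positivity: pairing the Gram data of a positive functional with a
positive semidefinite matrix gives a nonnegative number. -/
lemma gram_sum_nonneg {A : Type*} [Ring A] [Algebra ℂ A] [StarRing A] [StarModule ℂ A]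
    {ι : Type*} [Fintype ι] [DecidableEq ι]
    (ω : A →ₗ[ℂ] ℂ) (hωpos : ∀ a : A, 0 ≤ ω (star a * a)) (a : ι → A)
    (N : Matrix ι ι ℂ) (hN : N.PosSemidef) :
    0 ≤ ∑ i, ∑ j, ω (star (a i) * a j) * N i j := by
  obtain ⟨B, rfl⟩ : ∃ B : Matrix ι ι ℂ, N = B.conjTranspose * B := by
    open scoped MatrixOrder Matrix.Norms.L2Operator in
      exact CStarAlgebra.nonneg_iff_eq_star_mul_self.mp hN.nonneg
  have : ∑ i, ∑ j, ω (star (a i) * a j) * (B.conjTranspose * B) i j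
      = ∑ k, ω (star (∑ i, B k i • a i) * ∑ j, B k j • a j) := by
    calc ∑ i, ∑ j, ω (star (a i) * a j) * (B.conjTranspose * B) i j
        = ∑ i, ∑ j, ∑ k, starRingEnd ℂ (B k i) * B k j * ω (star (a i) * a j) := by
          refine Finset.sum_congr rfl fun i _ => Finset.sum_congr rfl fun j _ => ?_
          rw [Matrix.mul_apply, Finset.mul_sum]
          exact Finset.sum_congr rfl fun k _ => by
            simp only [Matrix.conjTranspose_apply, Complex.star_def]; ring
      _ = ∑ i, ∑ k, ∑ j, starRingEnd ℂ (B k i) * B k j * ω (star (a i) * a j) :=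
          Finset.sum_congr rfl fun i _ => Finset.sum_comm
      _ = ∑ k, ∑ i, ∑ j, starRingEnd ℂ (B k i) * B k j * ω (star (a i) * a j) :=
          Finset.sum_comm
      _ = ∑ k, ω (star (∑ i, B k i • a i) * ∑ j, B k j • a j) :=
          Finset.sum_congr rfl fun k _ => (expand_quad ω (B k) a).symm
  rw [this]
  exact Finset.sum_nonneg fun k _ => hωpos _

/-- The tensor product of two positive functionals is positive. -/
lemma tensorFunctional_pos {S P : Type*}
    [Ring S] [Algebra ℂ S] [StarRing S] [StarModule ℂ S]
    [Ring P] [Algebra ℂ P] [StarRing P] [StarModule ℂ P]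
    [StarRing (S ⊗[ℂ] P)]
    (hstar : ∀ (a : S) (b : P), star (a ⊗ₜ[ℂ] b) = star a ⊗ₜ[ℂ] star b)
    (ω : S →ₗ[ℂ] ℂ) (hωpos : ∀ a : S, 0 ≤ ω (star a * a))
    (σ : P →ₗ[ℂ] ℂ) (hσpos : ∀ b : P, 0 ≤ σ (star b * b))
    (x : S ⊗[ℂ] P) : 0 ≤ tensorFunctional ω σ (star x * x) := by
  classical
  obtain ⟨s, rfl⟩ := TensorProduct.exists_finset x
  have happ : ∀ (a : S) (b : P), tensorFunctional ω σ (a ⊗ₜ[ℂ] b) = ω a * σ b :=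
    fun a b => by simp [tensorFunctional]
  have hsx : star (∑ p ∈ s, p.1 ⊗ₜ[ℂ] p.2) = ∑ p ∈ s, star p.1 ⊗ₜ[ℂ] star p.2 := by
    rw [star_sum]; exact Finset.sum_congr rfl fun p _ => hstar _ _
  rw [hsx, Finset.sum_mul_sum]
  simp only [Algebra.TensorProduct.tmul_mul_tmul, map_sum, happ]
  set N : Matrix s s ℂ :=
    Matrix.of (fun i j : s => σ (star (i : S × P).2 * (j : S × P).2)) with hNdef
  have hN : N.PosSemidef := by
    refine Matrix.PosSemidef.of_dotProduct_mulVec_nonneg ?_ ?_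
    · ext i j
      simp only [Matrix.conjTranspose_apply, Matrix.of_apply, Complex.star_def, hNdef]
      exact (pos_herm σ hσpos _ _).symm
    · intro v
      have hdot : dotProduct (star v) (N.mulVec v)
          = ∑ i, ∑ j, starRingEnd ℂ (v i) * v j
              * σ (star (i : S × P).2 * (j : S × P).2) := by
        simp only [dotProduct, Matrix.mulVec, Pi.star_apply, Complex.star_def,
          Finset.mul_sum, hNdef, Matrix.of_apply]
        exact Finset.sum_congr rfl fun i _ => Finset.sum_congr rfl fun j _ => by ring
      rw [hdot, ← expand_quad σ v (fun i : s => (i : S × P).2)]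
      exact hσpos _
  have hmain := gram_sum_nonneg ω hωpos (fun i : s => (i : S × P).1) N hN
  have hconv : ∑ p ∈ s, ∑ q ∈ s, ω (star p.1 * q.1) * σ (star p.2 * q.2)
      = ∑ i : s, ∑ j : s, ω (star (i : S × P).1 * (j : S × P).1) * N i j := by
    rw [← Finset.sum_coe_sort s
      (fun p => ∑ q ∈ s, ω (star p.1 * q.1) * σ (star p.2 * q.2))]
    exact Finset.sum_congr rfl fun i _ =>
      (Finset.sum_coe_sort s fun q => ω (star (i : S × P).1 * q.1)
        * σ (star (i : S × P).2 * q.2)).symm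
  rw [hconv]
  exact hmain

/-- Let `ω`, `σ` be states on the unital complex `*`-algebras `S` and `P`, let
`Θ` be a unital star-preserving algebra automorphism of `S ⊗[ℂ] P` (with the
star determined by `(a ⊗ b)* = a* ⊗ b*`), and let `E ∈ P` be positive, i.e. a
finite sum `∑ i, λ i • (b i)* (b i)` with nonnegative real coefficients.  Then
the success probability `p := (ω ⊗ σ)(Θ (1 ⊗ E))` is a nonnegative real, and
if `p ≠ 0` then `C ↦ p⁻¹ * (ω ⊗ σ)(Θ (C ⊗ E))` is a state on `S`. -/
theorem selectiveUpdate_isState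
    {S P : Type*} [Ring S] [Algebra ℂ S] [StarRing S] [StarModule ℂ S]
    [Ring P] [Algebra ℂ P] [StarRing P] [StarModule ℂ P]
    [StarRing (S ⊗[ℂ] P)]
    (hstar : ∀ (a : S) (b : P), star (a ⊗ₜ[ℂ] b) = star a ⊗ₜ[ℂ] star b)
    (ω : S →ₗ[ℂ] ℂ) (hω1 : ω 1 = 1) (hωpos : ∀ a : S, 0 ≤ ω (star a * a))
    (σ : P →ₗ[ℂ] ℂ) (hσ1 : σ 1 = 1) (hσpos : ∀ b : P, 0 ≤ σ (star b * b))
    (Θ : (S ⊗[ℂ] P) ≃ₐ[ℂ] (S ⊗[ℂ] P))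
    (hΘstar : ∀ x : S ⊗[ℂ] P, Θ (star x) = star (Θ x))
    (E : P)
    (hE : ∃ (m : ℕ) (b : Fin m → P) (lam : Fin m → ℝ), (∀ i, 0 ≤ lam i) ∧
      E = ∑ i : Fin m, (lam i : ℂ) • (star (b i) * b i)) :
    0 ≤ selectiveUpdateAux ω σ Θ E 1 ∧
    (selectiveUpdateAux ω σ Θ E 1 ≠ 0 →
      (selectiveUpdateAux ω σ Θ E 1)⁻¹ * selectiveUpdateAux ω σ Θ E 1 = 1 ∧
      ∀ C : S, 0 ≤ (selectiveUpdateAux ω σ Θ E 1)⁻¹ *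
        selectiveUpdateAux ω σ Θ E (star C * C)) := by
  obtain ⟨m, b, lam, hlam, rfl⟩ := hE
  have keyC : ∀ C : S, 0 ≤ selectiveUpdateAux ω σ Θ
      (∑ i : Fin m, (lam i : ℂ) • (star (b i) * b i)) (star C * C) := by
    intro C
    have hexp : (star C * C) ⊗ₜ[ℂ] (∑ i : Fin m, (lam i : ℂ) • (star (b i) * b i))
        = ∑ i : Fin m, (lam i : ℂ) • (star (C ⊗ₜ[ℂ] b i) * (C ⊗ₜ[ℂ] b i)) := by
      rw [TensorProduct.tmul_sum]
      refine Finset.sum_congr rfl fun i _ => ?_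
      rw [TensorProduct.tmul_smul, hstar, Algebra.TensorProduct.tmul_mul_tmul]
    simp only [selectiveUpdateAux, LinearMap.coe_comp, Function.comp_apply,
      LinearMap.flip_apply, TensorProduct.mk_apply, AlgEquiv.toLinearMap_apply]
    rw [hexp, map_sum]
    simp only [map_smul, map_mul, ← hΘstar]
    rw [map_sum]
    simp only [map_smul, smul_eq_mul]
    refine Finset.sum_nonneg fun i _ => mul_nonneg ?_ ?_
    · exact_mod_cast Complex.zero_le_real.mpr (hlam i)
    · rw [hΘstar]
      exact tensorFunctional_pos hstar ω hωpos σ hσpos _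
  have hp : 0 ≤ selectiveUpdateAux ω σ Θ
      (∑ i : Fin m, (lam i : ℂ) • (star (b i) * b i)) 1 := by
    have := keyC 1; rwa [star_one, one_mul] at this
  refine ⟨hp, fun hne => ⟨inv_mul_cancel₀ hne, fun C => ?_⟩⟩
  have hinv : 0 ≤ (selectiveUpdateAux ω σ Θ
      (∑ i : Fin m, (lam i : ℂ) • (star (b i) * b i)) 1)⁻¹ := by
    obtain ⟨hre, him⟩ := Complex.nonneg_iff.mp hp
    rw [Complex.nonneg_iff]
    constructor
    · rw [Complex.inv_re]
      exact div_nonneg hre (Complex.normSq_nonneg _)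
    · rw [Complex.inv_im, ← him]
      simp
  exact mul_nonneg hinv (keyC C)
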